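/- If λ > 0 is such that ⟨x, P₀ x⟩ ≥ λ‖x‖² for all x ∈ ℝ^d, then the gradient of the candidate control Lyapunov function satisfies the Łojasiewicz-type inequality ‖∇V(x)‖² ≥ λ · V(x) for every x ∈ ℝ^d. -/
import Mathlib


open scoped RealInnerProductSpace BigOperators

/-- Action of a `d × d` real matrix on `ℝ^d` (Euclidean space). -/
noncomputable def mApp {d : ℕ} (P : Matrix (Fin d) (Fin d) ℝ)
    (x : EuclideanSpace ℝ (Fin d)) : EuclideanSpace ℝ (Fin d) :=
  Matrix.toEuclideanLin P x

/-- `σ(x) = ⟨x, P(x − μ)⟩`. -/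
noncomputable def sig {d : ℕ} (P : Matrix (Fin d) (Fin d) ℝ)
    (μ x : EuclideanSpace ℝ (Fin d)) : ℝ :=
  ⟪x, mApp P (x - μ)⟫

/-- Candidate control Lyapunov function
`V(x) = ⟨x, P₀ x⟩ + Σ_{l=1}^{L} max(σ_l(x), 0)²`. -/
noncomputable def V {d L : ℕ} (P₀ : Matrix (Fin d) (Fin d) ℝ)
    (P : Fin L → Matrix (Fin d) (Fin d) ℝ) (μ : Fin L → EuclideanSpace ℝ (Fin d))
    (x : EuclideanSpace ℝ (Fin d)) : ℝ :=
  ⟪x, mApp P₀ x⟫ + ∑ l, max (sig (P l) (μ l) x) 0 ^ 2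

/-- The gradient formula
`∇V(x) = 2 P₀ x + 2 Σ_{l=1}^{L} max(σ_l(x), 0) · P_l (2x − μ_l)`. -/
noncomputable def gradV {d L : ℕ} (P₀ : Matrix (Fin d) (Fin d) ℝ)
    (P : Fin L → Matrix (Fin d) (Fin d) ℝ) (μ : Fin L → EuclideanSpace ℝ (Fin d))
    (x : EuclideanSpace ℝ (Fin d)) : EuclideanSpace ℝ (Fin d) :=
  (2 : ℝ) • mApp P₀ x +
    (2 : ℝ) • ∑ l, max (sig (P l) (μ l) x) 0 • mApp (P l) ((2 : ℝ) • x - μ l)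

lemma mApp_inner_nonneg {d : ℕ} {P : Matrix (Fin d) (Fin d) ℝ} (hP : P.PosDef)
    (x : EuclideanSpace ℝ (Fin d)) : 0 ≤ ⟪x, mApp P x⟫ := by
  have h := hP.posSemidef.re_dotProduct_nonneg (WithLp.equiv 2 _ x)
  simpa [mApp, Matrix.toEuclideanLin_apply, real_inner_comm,
    PiLp.inner_apply, dotProduct, mul_comm] using h

lemma mApp_sub {d : ℕ} (P : Matrix (Fin d) (Fin d) ℝ) (a b : EuclideanSpace ℝ (Fin d)) :
    mApp P (a - b) = mApp P a - mApp P b := by simp [mApp]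

lemma mApp_smul {d : ℕ} (P : Matrix (Fin d) (Fin d) ℝ) (c : ℝ) (a : EuclideanSpace ℝ (Fin d)) :
    mApp P (c • a) = c • mApp P a := by simp [mApp]

/-- if `λ > 0` satisfies `⟨x, P₀ x⟩ ≥ λ‖x‖²` for all `x`, then
`‖∇V(x)‖² ≥ λ · V(x)` for every `x ∈ ℝ^d`. -/
theorem stmt_9 {d L : ℕ} (P₀ : Matrix (Fin d) (Fin d) ℝ)
    (P : Fin L → Matrix (Fin d) (Fin d) ℝ) (μ : Fin L → EuclideanSpace ℝ (Fin d))
    (hP₀ : P₀.PosDef) (hP : ∀ l, (P l).PosDef) (lam : ℝ) (hlam : 0 < lam)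
    (hlb : ∀ x : EuclideanSpace ℝ (Fin d), lam * ‖x‖ ^ 2 ≤ ⟪x, mApp P₀ x⟫) :
    ∀ x : EuclideanSpace ℝ (Fin d), lam * V P₀ P μ x ≤ ‖gradV P₀ P μ x‖ ^ 2 := by
  intro x
  have hsig : ∀ l, sig (P l) (μ l) x = ⟪x, mApp (P l) x⟫ - ⟪x, mApp (P l) (μ l)⟫ := by
    intro l; rw [sig, mApp_sub, inner_sub_right]
  have hterm : ∀ l : Fin L, ⟪x, max (sig (P l) (μ l) x) 0 • mApp (P l) ((2:ℝ) • x - μ l)⟫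
      = max (sig (P l) (μ l) x) 0 * (⟪x, mApp (P l) x⟫ + sig (P l) (μ l) x) := by
    intro l
    rw [real_inner_smul_right, mApp_sub, mApp_smul, inner_sub_right,
      real_inner_smul_right, hsig l]
    ring
  have hinner : ⟪x, gradV P₀ P μ x⟫ = 2 * ⟪x, mApp P₀ x⟫ +
      2 * ∑ l, max (sig (P l) (μ l) x) 0 * (⟪x, mApp (P l) x⟫ + sig (P l) (μ l) x) := by
    simp only [gradV, inner_add_right, real_inner_smul_right, inner_sum, hterm]
  have hsumle : ∑ l, max (sig (P l) (μ l) x) 0 ^ 2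
      ≤ ∑ l, max (sig (P l) (μ l) x) 0 * (⟪x, mApp (P l) x⟫ + sig (P l) (μ l) x) := by
    apply Finset.sum_le_sum
    intro l _
    have h0 : (0:ℝ) ≤ max (sig (P l) (μ l) x) 0 := le_max_right _ _
    have hq := mApp_inner_nonneg (hP l) x
    have hms : max (sig (P l) (μ l) x) 0 * sig (P l) (μ l) x
        = max (sig (P l) (μ l) x) 0 ^ 2 := by
      rcases le_total (sig (P l) (μ l) x) 0 with h | h
      · simp [max_eq_right h]
      · simp [max_eq_left h]; ring
    nlinarith [mul_nonneg h0 hq]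
  have h2V : 2 * V P₀ P μ x ≤ ⟪x, gradV P₀ P μ x⟫ := by
    rw [hinner, V]; linarith
  have hcs : ⟪x, gradV P₀ P μ x⟫ ≤ ‖x‖ * ‖gradV P₀ P μ x‖ := real_inner_le_norm x _
  have hVlb : lam * ‖x‖ ^ 2 ≤ V P₀ P μ x := by
    have hs : (0:ℝ) ≤ ∑ l, max (sig (P l) (μ l) x) 0 ^ 2 :=
      Finset.sum_nonneg fun l _ => sq_nonneg _
    have := hlb x
    rw [V]; linarith
  have hV0 : 0 ≤ V P₀ P μ x := le_trans (by positivity) hVlb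
  rcases eq_or_lt_of_le hV0 with h0 | hpos
  · rw [← h0]; simpa using sq_nonneg ‖gradV P₀ P μ x‖
  · have ha : (0:ℝ) ≤ ‖x‖ := norm_nonneg _
    have hn : (0:ℝ) ≤ ‖gradV P₀ P μ x‖ := norm_nonneg _
    have h4 : 4 * V P₀ P μ x ^ 2 ≤ (‖x‖ * ‖gradV P₀ P μ x‖) ^ 2 := by
      nlinarith [mul_nonneg ha hn]
    nlinarith [mul_le_mul_of_nonneg_right hVlb (sq_nonneg ‖gradV P₀ P μ x‖),
      mul_pos hlam hpos]
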